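/- (Gelfand–Yaglom–Perez theorem for Rényi relative entropy, main inequality) Let P and R be probability measures with P ≪ R, φ = dP/dR, and α > 1. Then ∫_X φ^α dR equals the supremum, over all finite measurable partitions {E_1,...,E_m} of X, of Σ_{k=1}^m P(E_k)^α / R(E_k)^(α-1). -/

import Mathlib

open MeasureTheory ENNReal Filter

/-- A finite measurable partition of `X`. -/
structure FinPartition (X : Type*) [MeasurableSpace X] where
  m : ℕ
  E : Fin m → Set X
  meas : ∀ k, MeasurableSet (E k)
  disj : Pairwise (Function.onFun Disjoint E)
  cover : ⋃ k, E k = Set.univ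

/-- The partition induced by a simple function: fibers over its range. -/
noncomputable def SimpleFunc.toFinPartition {X : Type*} [MeasurableSpace X]
    (s : SimpleFunc X ℝ≥0∞) : FinPartition X where
  m := s.range.card
  E := fun k => ⇑s ⁻¹' {(s.range.equivFin.symm k : ℝ≥0∞)}
  meas := fun k => s.measurableSet_fiber _
  disj := by
    intro k l hkl
    simp only [Function.onFun]
    rw [Set.disjoint_left]
    rintro x hx hx'
    simp only [Set.mem_preimage, Set.mem_singleton_iff] at hx hx'
    apply hkl
    have : (s.range.equivFin.symm k : ℝ≥0∞) = (s.range.equivFin.symm l : ℝ≥0∞) :=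
      hx ▸ hx'
    have h2 : s.range.equivFin.symm k = s.range.equivFin.symm l := Subtype.ext this
    exact s.range.equivFin.symm.injective h2
  cover := by
    ext x
    simp only [Set.mem_iUnion, Set.mem_univ, iff_true]
    refine ⟨s.range.equivFin ⟨s x, s.mem_range_self x⟩, ?_⟩
    simp only [Set.mem_preimage, Set.mem_singleton_iff, Equiv.symm_apply_apply]

/-- Per-set upper bound via Hölder's inequality. -/
lemma set_term_le {X : Type*} [MeasurableSpace X]
    (P R : Measure X) [IsProbabilityMeasure P] [IsProbabilityMeasure R]
    (h : P ≪ R) (α : ℝ) (hα : 1 < α) {E : Set X} (hE : MeasurableSet E) :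
    P E ^ α / R E ^ (α - 1) ≤ ∫⁻ x in E, P.rnDeriv R x ^ α ∂ R := by
  have hα0 : (0:ℝ) < α := lt_trans one_pos hα
  by_cases hRE : R E = 0
  · have hPE : P E = 0 := h hRE
    rw [hPE, ENNReal.zero_rpow_of_pos hα0, ENNReal.zero_div]
    exact zero_le
  · have hconj : α.HolderConjugate (α / (α - 1)) := Real.HolderConjugate.conjExponent hα
    set q : ℝ := α / (α - 1) with hq
    have hφ : Measurable (P.rnDeriv R) := Measure.measurable_rnDeriv P R
    -- Hölder on the restricted measure with g = 1
    have hHolder := ENNReal.lintegral_mul_le_Lp_mul_Lq (R.restrict E) hconj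
      hφ.aemeasurable (aemeasurable_const : AEMeasurable (fun _ => (1:ℝ≥0∞)) _)
    simp only [Pi.mul_apply, mul_one, ENNReal.one_rpow, lintegral_const,
      Measure.restrict_apply MeasurableSet.univ, Set.univ_inter, one_mul] at hHolder
    have hPE : P E = ∫⁻ x in E, P.rnDeriv R x ∂ R :=
      (Measure.setLIntegral_rnDeriv h E).symm
    set A : ℝ≥0∞ := ∫⁻ x in E, P.rnDeriv R x ^ α ∂ R with hA
    have h1 : P E ≤ A ^ (1/α) * R E ^ (1/q) := by rw [hPE]; exact hHolder
    have h2 : P E ^ α ≤ A * R E ^ (α - 1) := by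
      calc P E ^ α ≤ (A ^ (1/α) * R E ^ (1/q)) ^ α :=
            ENNReal.rpow_le_rpow h1 hα0.le
        _ = A ^ (1/α * α) * R E ^ (1/q * α) := by
            rw [ENNReal.mul_rpow_of_nonneg _ _ hα0.le, ← ENNReal.rpow_mul,
              ← ENNReal.rpow_mul]
        _ = A * R E ^ (α - 1) := by
            rw [one_div_mul_cancel (ne_of_gt hα0), ENNReal.rpow_one]
            congr 1
            rw [hq]
            field_simp
    rw [ENNReal.div_le_iff]
    · exact h2
    · rw [Ne, ENNReal.rpow_eq_zero_iff]
      push_neg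
      constructor
      · intro h'; exact absurd h' hRE
      · intro h'; exact absurd h' (measure_ne_top R E)
    · exact ENNReal.rpow_ne_top_of_nonneg (by linarith) (measure_ne_top R E)

/-- Upper bound: the sum for any partition is at most the integral. -/
lemma partition_sum_le {X : Type*} [MeasurableSpace X]
    (P R : Measure X) [IsProbabilityMeasure P] [IsProbabilityMeasure R]
    (h : P ≪ R) (α : ℝ) (hα : 1 < α) (π : FinPartition X) :
    ∑ k, P (π.E k) ^ α / R (π.E k) ^ (α - 1) ≤ ∫⁻ x, P.rnDeriv R x ^ α ∂ R := by
  calc ∑ k, P (π.E k) ^ α / R (π.E k) ^ (α - 1)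
      ≤ ∑ k, ∫⁻ x in π.E k, P.rnDeriv R x ^ α ∂ R :=
        Finset.sum_le_sum fun k _ => set_term_le P R h α hα (π.meas k)
    _ = ∫⁻ x, P.rnDeriv R x ^ α ∂ R := by
        rw [← tsum_fintype (L := SummationFilter.unconditional _), ← lintegral_iUnion π.meas π.disj, π.cover,
          Measure.restrict_univ]

/-- Lower bound per simple function below the density. -/
lemma simple_le_sup {X : Type*} [MeasurableSpace X]
    (P R : Measure X) [IsProbabilityMeasure P] [IsProbabilityMeasure R]
    (h : P ≪ R) (α : ℝ) (hα : 1 < α) (s : SimpleFunc X ℝ≥0∞)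
    (hs : ∀ x, s x ≤ P.rnDeriv R x) :
    ∫⁻ x, s x ^ α ∂ R
      ≤ ⨆ π : FinPartition X, ∑ k, P (π.E k) ^ α / R (π.E k) ^ (α - 1) := by
  have hα0 : (0:ℝ) < α := lt_trans one_pos hα
  set π := SimpleFunc.toFinPartition s with hπ
  refine le_trans ?_ (le_iSup _ π)
  -- rewrite the lintegral as a sum over the range
  have hmap : ∫⁻ x, s x ^ α ∂ R = ∑ y ∈ s.range, y ^ α * R (⇑s ⁻¹' {y}) := by
    have : (fun x => s x ^ α) = ⇑(s.map (· ^ α)) := by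
      ext x; simp [SimpleFunc.map_apply]
    rw [this, SimpleFunc.lintegral_eq_lintegral, SimpleFunc.map_lintegral]
  rw [hmap]
  -- convert the Fin-indexed sum to a range-indexed sum
  have hsum : ∑ k, P (π.E k) ^ α / R (π.E k) ^ (α - 1)
      = ∑ y ∈ s.range, P (⇑s ⁻¹' {y}) ^ α / R (⇑s ⁻¹' {y}) ^ (α - 1) := by
    rw [← Finset.sum_coe_sort s.range
      (fun y => P (⇑s ⁻¹' {(y : ℝ≥0∞)}) ^ α / R (⇑s ⁻¹' {(y : ℝ≥0∞)}) ^ (α - 1)),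
      ← Equiv.sum_comp s.range.equivFin.symm]
    rfl
  rw [hsum]
  refine Finset.sum_le_sum fun y hy => ?_
  -- per-fiber lower bound
  set E : Set X := ⇑s ⁻¹' {y} with hE
  have hEmeas : MeasurableSet E := s.measurableSet_fiber y
  by_cases hRE : R E = 0
  · simp [hRE]
  · have hREtop : R E ≠ ⊤ := measure_ne_top R E
    have hPE : y * R E ≤ P E := by
      have : P E = ∫⁻ x in E, P.rnDeriv R x ∂ R := (Measure.setLIntegral_rnDeriv h E).symm
      rw [this, ← setLIntegral_const E y]
      refine setLIntegral_mono (Measure.measurable_rnDeriv P R) fun x hx => ?_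
      have hxy : s x = y := hx
      rw [← hxy]; exact hs x
    calc y ^ α * R E = y ^ α * (R E ^ α / R E ^ (α - 1)) := by
          rw [← ENNReal.rpow_sub _ _ hRE hREtop]
          norm_num
      _ = (y * R E) ^ α / R E ^ (α - 1) := by
          rw [ENNReal.mul_rpow_of_nonneg _ _ hα0.le, mul_div_assoc]
      _ ≤ P E ^ α / R E ^ (α - 1) :=
          ENNReal.div_le_div_right (ENNReal.rpow_le_rpow hPE hα0.le) _

theorem gyp_renyi_integral {X : Type*} [MeasurableSpace X]
    (P R : Measure X) [IsProbabilityMeasure P] [IsProbabilityMeasure R]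
    (h : P ≪ R) (α : ℝ) (hα : 1 < α) :
    ∫⁻ x, P.rnDeriv R x ^ α ∂ R
      = ⨆ π : FinPartition X, ∑ k, P (π.E k) ^ α / R (π.E k) ^ (α - 1) := by
  have hα0 : (0:ℝ) < α := lt_trans one_pos hα
  have hφ : Measurable (P.rnDeriv R) := Measure.measurable_rnDeriv P R
  apply le_antisymm
  · -- integral ≤ sup, via monotone convergence of eapprox
    have key : ∫⁻ x, P.rnDeriv R x ^ α ∂ R
        = ⨆ n, ∫⁻ x, (SimpleFunc.eapprox (P.rnDeriv R) n) x ^ α ∂ R := by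
      rw [← lintegral_iSup]
      · congr 1
        ext x
        rw [← SimpleFunc.iSup_eapprox_apply hφ x]
        have h1 : ∀ z : ℝ≥0∞, (ENNReal.orderIsoRpow α hα0) z = z ^ α :=
          ENNReal.orderIsoRpow_apply α hα0
        calc (⨆ n, (SimpleFunc.eapprox (P.rnDeriv R) n) x) ^ α
            = (ENNReal.orderIsoRpow α hα0)
                (⨆ n, (SimpleFunc.eapprox (P.rnDeriv R) n) x) := (h1 _).symm
          _ = ⨆ n, (ENNReal.orderIsoRpow α hα0)
                ((SimpleFunc.eapprox (P.rnDeriv R) n) x) :=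
              OrderIso.map_iSup _ _
          _ = ⨆ n, (SimpleFunc.eapprox (P.rnDeriv R) n) x ^ α := by simp_rw [h1]
      · exact fun n => (SimpleFunc.eapprox (P.rnDeriv R) n).measurable.pow_const α
      · intro n m hnm x
        exact ENNReal.rpow_le_rpow
          (SimpleFunc.monotone_eapprox (P.rnDeriv R) hnm x) hα0.le
    rw [key]
    refine iSup_le fun n => ?_
    refine simple_le_sup P R h α hα _ fun x => ?_
    rw [← SimpleFunc.iSup_eapprox_apply hφ x]
    exact le_iSup (fun n => (SimpleFunc.eapprox (P.rnDeriv R) n) x) n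
  · exact iSup_le fun π => partition_sum_le P R h α hα π
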